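/- Let S be a generalized Krull domain and J an ideal of S having only finitely many minimal primes over it, all of height at least two. Let A be a subring of S/J over which S/J is integral, and let R be the pullback of the diagram A → S/J ← S (i.e., R = {s ∈ S : s + J ∈ A}). Then the contraction map Spec S → Spec R induces a bijection from the set of height-one primes of S onto the set of height-one primes of R, under which the corresponding localizations coincide (for a height-one prime Q of S with P = Q ∩ R, the canonical map R_P → S_Q is an isomorphism). In particular, R_P is a valuation domain for every height-one prime P of R. -/

import Mathlib

/-- A ring homomorphism `f : A →+* B` satisfies going-down: whenever `p₁ ⊆ p₂` are primes of `A`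
and `Q₂` is a prime of `B` contracting to `p₂`, there is a prime `Q₁ ⊆ Q₂` of `B`
contracting to `p₁`. -/
def GoingDownHom {A B : Type*} [CommRing A] [CommRing B] (f : A →+* B) : Prop :=
  ∀ (p₁ p₂ : Ideal A), p₁.IsPrime → p₂.IsPrime → p₁ ≤ p₂ →
    ∀ Q₂ : Ideal B, Q₂.IsPrime → Q₂.comap f = p₂ →
      ∃ Q₁ : Ideal B, Q₁.IsPrime ∧ Q₁ ≤ Q₂ ∧ Q₁.comap f = p₁

/-- The canonical map from the localization of a subring `A ⊆ B` at a submonoid `W ⊆ A`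
to the localization of `B` at the image of `W` in `B`. -/
noncomputable def locMap {B : Type*} [CommRing B] (A : Subring B) (W : Submonoid A) :
    Localization W →+* Localization (W.map A.subtype) :=
  IsLocalization.lift (M := W) (S := Localization W)
    (g := (algebraMap B (Localization (W.map A.subtype))).comp A.subtype)
    (fun y => IsLocalization.map_units (M := W.map A.subtype) (Localization (W.map A.subtype))
      ⟨A.subtype y, ⟨y, y.2, rfl⟩⟩)

/-- A subring `A ⊆ B` is perinormal in `B` at the prime `p` of `A`:  the localization `A_p`
(i.e. the image of `Localization.AtPrime p` in `B_{A∖p}`) is the only local ring `T` between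
`A_p` and `B_{A∖p}` whose maximal ideal contracts to `pA_p` and which satisfies going-down
over `A_p`. -/
def PeriAt {B : Type*} [CommRing B] (A : Subring B) (p : Ideal A) (hp : p.IsPrime) : Prop :=
  haveI := hp
  ∀ (T : Subring (Localization (p.primeCompl.map A.subtype)))
    (hT : (locMap A p.primeCompl).range ≤ T),
    IsLocalRing T →
    (∀ M : Ideal T, M.IsMaximal →
      M.comap ((locMap A p.primeCompl).codRestrict T (fun x => hT ⟨x, rfl⟩)) =
        IsLocalRing.maximalIdeal (Localization.AtPrime p)) →
    GoingDownHom ((locMap A p.primeCompl).codRestrict T (fun x => hT ⟨x, rfl⟩)) →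
    T = (locMap A p.primeCompl).range

/-- A subring `A` of `B` is perinormal in `B`. -/
def PerinormalIn {B : Type*} [CommRing B] (A : Subring B) : Prop :=
  ∀ (p : Ideal A) (hp : p.IsPrime), PeriAt A p hp

/-- An integral domain `R` is perinormal:  every local overring of `R`
(local ring between `R` and its fraction field) satisfying going-down over `R`
is a localization of `R` at a prime ideal. -/
def PerinormalDomain (R : Type*) [CommRing R] [IsDomain R] : Prop :=
  ∀ (T : Subring (FractionRing R)) (hT : (algebraMap R (FractionRing R)).range ≤ T),
    IsLocalRing T →
    GoingDownHom ((algebraMap R (FractionRing R)).codRestrict T (fun x => hT ⟨x, rfl⟩)) →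
    ∃ p : Ideal R, p.IsPrime ∧
      (T : Set (FractionRing R)) =
        {x | ∃ r s : R, s ∉ p ∧
          x * algebraMap R (FractionRing R) s = algebraMap R (FractionRing R) r}

/-- A subring `A ⊆ B` is apparently fragile in `B`: for every ring `C` with `A ⊊ C ⊆ B`
there are a minimal prime `p` of `A` and distinct primes `P, Q` of `C` contracting to `p`. -/
def ApparentlyFragile {B : Type*} [CommRing B] (A : Subring B) : Prop :=
  ∀ (C : Subring B) (hAC : A ≤ C), A ≠ C →
    ∃ p ∈ minimalPrimes A, ∃ P Q : Ideal C, P.IsPrime ∧ Q.IsPrime ∧ P ≠ Q ∧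
      P.comap (Subring.inclusion hAC) = p ∧ Q.comap (Subring.inclusion hAC) = p

/-- A subring `A ⊆ B` is fragile in `B`: for every prime `P` of `A`, the extension
`A_P ⊆ B_{A∖P}` is apparently fragile. -/
def Fragile {B : Type*} [CommRing B] (A : Subring B) : Prop :=
  ∀ (P : Ideal A) (hP : P.IsPrime),
    haveI := hP
    ApparentlyFragile (locMap A P.primeCompl).range

/-- A subring `A ⊆ B` is globally fragile in `B`: for every multiplicative subset `W` of `A`,
the extension `A_W ⊆ B_W` is apparently fragile. -/
def GloballyFragile {B : Type*} [CommRing B] (A : Subring B) : Prop :=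
  ∀ W : Submonoid A, ApparentlyFragile (locMap A W).range

/-- An integral domain `S` is a generalized Krull domain: (i) `S` is the intersection of its
localizations at height-one primes (inside its fraction field), (ii) every nonzero element lies
in only finitely many height-one primes, and (iii) the localization at every height-one prime
is a valuation ring. -/
def IsGenKrull (S : Type*) [CommRing S] [IsDomain S] : Prop :=
  (∀ x : FractionRing S,
      (∀ (p : Ideal S) (hp : p.IsPrime), Order.height (⟨p, hp⟩ : PrimeSpectrum S) = 1 →
        ∃ a s : S, s ∉ p ∧ x * algebraMap S (FractionRing S) s = algebraMap S (FractionRing S) a) →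
      ∃ r : S, algebraMap S (FractionRing S) r = x) ∧
  (∀ s : S, s ≠ 0 →
      {p : Ideal S | ∃ hp : p.IsPrime, Order.height (⟨p, hp⟩ : PrimeSpectrum S) = 1 ∧ s ∈ p}.Finite) ∧
  (∀ (p : Ideal S) (hp : p.IsPrime), Order.height (⟨p, hp⟩ : PrimeSpectrum S) = 1 →
      haveI := hp
      ValuationRing (Localization.AtPrime p))

/-- A prime ideal `Q` has height one. -/
def HeightOne {S : Type*} [CommRing S] (Q : Ideal S) : Prop :=
  ∃ hQ : Q.IsPrime, Order.height (⟨Q, hQ⟩ : PrimeSpectrum S) = 1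


section PullbackAux

lemma heightAux' {α β : Type*} [Preorder α] [Preorder β] {a : α} {b : β}
    (f : Set.Iic a → β) (hfa : f ⟨a, le_refl a⟩ = b)
    (hf : ∀ x y : Set.Iic a, (x : α) < y → f x < f y) :
    Order.height a ≤ Order.height b := by
  apply Order.height_le
  intro p hp
  have hmem : ∀ i, p i ≤ a := fun i => hp ▸ p.monotone (Fin.le_last i)
  let q : LTSeries β := ⟨p.length, fun i => f ⟨p i, hmem i⟩, fun i => hf _ _ (p.step i)⟩
  have hq : q.last = b := by
    show f ⟨p (Fin.last _), _⟩ = b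
    rw [← hfa]
    congr 1
    exact Subtype.ext hp
  calc (p.length : ℕ∞) = (q.length : ℕ∞) := rfl
    _ ≤ Order.height q.last := Order.length_le_height_last
    _ = Order.height b := by rw [hq]

variable {S : Type*} [CommRing S] {R : Subring S}

/-- Extension of an ideal `p` of the subring `R` to the big ring `S`, relative to a prime
`P` of `R` and an element `t ∈ J ∖ P` where `J ⊆ R` is an ideal of `S`. -/
def extId (J : Ideal S) (hJR : ∀ x ∈ J, x ∈ R) {t : S} (htJ : t ∈ J)
    {P : Ideal R} (hP : P.IsPrime) (htP : (⟨t, hJR t htJ⟩ : R) ∉ P) (p : Ideal R) : Ideal S where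
  carrier := {s | ∃ w : R, w ∉ P ∧ ∃ r ∈ p, (r : S) = (w : S) * s}
  zero_mem' := ⟨1, fun h => hP.ne_top (P.eq_top_of_isUnit_mem h isUnit_one),
    0, p.zero_mem, by simp⟩
  add_mem' := by
    rintro s₁ s₂ ⟨w₁, hw₁, r₁, hr₁, he₁⟩ ⟨w₂, hw₂, r₂, hr₂, he₂⟩
    refine ⟨w₁ * w₂, fun h => ((hP.mem_or_mem h).elim hw₁ hw₂),
      w₂ * r₁ + w₁ * r₂, p.add_mem (p.mul_mem_left _ hr₁) (p.mul_mem_left _ hr₂), ?_⟩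
    push_cast
    rw [he₁, he₂]; ring
  smul_mem' := by
    rintro c s ⟨w, hw, r, hr, he⟩
    refine ⟨⟨t, hJR t htJ⟩ * w, fun h => (hP.mem_or_mem h).elim htP hw,
      ⟨t * c, hJR _ (J.mul_mem_right c htJ)⟩ * r, p.mul_mem_left _ hr, ?_⟩
    push_cast
    rw [smul_eq_mul, he]; ring

lemma mem_extId {J : Ideal S} {hJR : ∀ x ∈ J, x ∈ R} {t : S} {htJ : t ∈ J}
    {P : Ideal R} {hP : P.IsPrime} {htP : (⟨t, hJR t htJ⟩ : R) ∉ P} {p : Ideal R} {s : S} :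
    s ∈ extId J hJR htJ hP htP p ↔ ∃ w : R, w ∉ P ∧ ∃ r ∈ p, (r : S) = (w : S) * s :=
  Iff.rfl

variable {J : Ideal S} {hJR : ∀ x ∈ J, x ∈ R} {t : S} {htJ : t ∈ J}

lemma comap_extId {P : Ideal R} {hP : P.IsPrime} {htP : (⟨t, hJR t htJ⟩ : R) ∉ P}
    {p : Ideal R} (hp : p.IsPrime) (hpP : p ≤ P) :
    (extId J hJR htJ hP htP p).comap R.subtype = p := by
  ext x
  simp only [Ideal.mem_comap, Subring.coe_subtype, mem_extId]
  constructor
  · rintro ⟨w, hw, r, hr, he⟩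
    have : r = w * x := Subtype.ext (by simpa using he)
    exact (hp.mem_or_mem (this ▸ hr)).resolve_left (fun h => hw (hpP h))
  · intro hx
    exact ⟨1, fun h => hP.ne_top (P.eq_top_of_isUnit_mem h isUnit_one), x, hx, by simp⟩

lemma extId_isPrime {P : Ideal R} {hP : P.IsPrime} {htP : (⟨t, hJR t htJ⟩ : R) ∉ P}
    {p : Ideal R} (hp : p.IsPrime) (hpP : p ≤ P) :
    (extId J hJR htJ hP htP p).IsPrime := by
  constructor
  · intro h1
    rw [Ideal.eq_top_iff_one, mem_extId] at h1
    obtain ⟨w, hw, r, hr, he⟩ := h1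
    rw [mul_one] at he
    exact hw (hpP ((Subtype.ext he : r = w) ▸ hr))
  · intro s u hsu
    rw [mem_extId] at hsu
    obtain ⟨w, hw, r, hr, he⟩ := hsu
    have hts : t * s ∈ J := J.mul_mem_right s htJ
    have htu : t * u ∈ J := J.mul_mem_right u htJ
    have key : w * ⟨t * s, hJR _ hts⟩ * ⟨t * u, hJR _ htu⟩
        = ⟨t, hJR t htJ⟩ * ⟨t, hJR t htJ⟩ * r := by
      apply Subtype.ext
      push_cast
      rw [he]; ring
    have hmem : w * ⟨t * s, hJR _ hts⟩ * ⟨t * u, hJR _ htu⟩ ∈ p :=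
      key ▸ p.mul_mem_left _ hr
    rcases hp.mem_or_mem hmem with h | h
    · exact Or.inl (mem_extId.mpr ⟨w * ⟨t, hJR t htJ⟩,
        fun hh => (hP.mem_or_mem hh).elim hw htP,
        w * ⟨t * s, hJR _ hts⟩, h, by push_cast; ring⟩)
    · exact Or.inr (mem_extId.mpr ⟨⟨t, hJR t htJ⟩, htP, ⟨t * u, hJR _ htu⟩, h,
        by push_cast; ring⟩)

lemma extId_lt_extId {P : Ideal R} {hP : P.IsPrime} {htP : (⟨t, hJR t htJ⟩ : R) ∉ P}
    {p₁ p₂ : Ideal R} (hp₁ : p₁.IsPrime) (hp₁P : p₁ ≤ P) (h : p₁ < p₂) :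
    extId J hJR htJ hP htP p₁ < extId J hJR htJ hP htP p₂ := by
  have hle : extId J hJR htJ hP htP p₁ ≤ extId J hJR htJ hP htP p₂ := by
    intro s hs
    obtain ⟨w, hw, r, hr, he⟩ := mem_extId.mp hs
    exact mem_extId.mpr ⟨w, hw, r, h.le hr, he⟩
  obtain ⟨r, hr2, hr1⟩ := SetLike.exists_of_lt h
  refine lt_of_le_of_ne hle (fun heq => hr1 ?_)
  have : (r : S) ∈ extId J hJR htJ hP htP p₂ :=
    mem_extId.mpr ⟨1, fun hh => hP.ne_top (P.eq_top_of_isUnit_mem hh isUnit_one), r, hr2, by simp⟩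
  rw [← heq, mem_extId] at this
  obtain ⟨w, hw, r', hr', he⟩ := this
  have heq2 : r' = w * r := Subtype.ext (by simpa using he)
  exact (hp₁.mem_or_mem (heq2 ▸ hr')).resolve_left (fun hh => hw (hp₁P hh))

lemma extId_self (Q : Ideal S) (hQ : Q.IsPrime) (htQ : t ∉ Q) :
    extId J hJR htJ (hQ.comap R.subtype) (htP := fun h => htQ h) (Q.comap R.subtype) = Q := by
  ext s
  rw [mem_extId]
  constructor
  · rintro ⟨w, hw, r, hr, he⟩
    have hrQ : (r : S) ∈ Q := hr
    rw [he] at hrQ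
    exact (hQ.mem_or_mem hrQ).resolve_left (fun h => hw h)
  · intro hs
    exact ⟨⟨t, hJR t htJ⟩, fun h => htQ h,
      ⟨t * s, hJR _ (J.mul_mem_right s htJ)⟩, Q.mul_mem_left t hs, rfl⟩

include hJR htJ in
lemma height_comap_eq (Q : Ideal S) (hQ : Q.IsPrime) (htQ : t ∉ Q) :
    Order.height (⟨Q.comap R.subtype, hQ.comap R.subtype⟩ : PrimeSpectrum R)
      = Order.height (⟨Q, hQ⟩ : PrimeSpectrum S) := by
  apply le_antisymm
  · refine heightAux' (b := (⟨Q, hQ⟩ : PrimeSpectrum S))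
      (f := fun x => ⟨extId J hJR htJ (hQ.comap R.subtype) (fun h => htQ h) x.1.asIdeal,
        extId_isPrime x.1.2 x.2⟩) ?_ ?_
    · exact PrimeSpectrum.ext (extId_self (J := J) (hJR := hJR) (htJ := htJ) Q hQ htQ)
    · intro x y hxy
      exact extId_lt_extId (J := J) (hJR := hJR) (htJ := htJ) (hP := hQ.comap R.subtype)
        (htP := fun h => htQ h) x.1.2 x.2 hxy
  · refine heightAux' (b := (⟨Q.comap R.subtype, hQ.comap R.subtype⟩ : PrimeSpectrum R))
      (f := fun x => ⟨x.1.asIdeal.comap R.subtype, x.1.2.comap R.subtype⟩) rfl ?_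
    intro x y hxy
    have hle : x.1.asIdeal.comap R.subtype ≤ y.1.asIdeal.comap R.subtype :=
      Ideal.comap_mono hxy.le
    obtain ⟨s, hs2, hs1⟩ := SetLike.exists_of_lt (show x.1.asIdeal < y.1.asIdeal from hxy)
    have hts : (⟨t * s, hJR _ (J.mul_mem_right s htJ)⟩ : R) ∈ y.1.asIdeal.comap R.subtype :=
      y.1.asIdeal.mul_mem_left t hs2
    have hnot : (⟨t * s, hJR _ (J.mul_mem_right s htJ)⟩ : R) ∉ x.1.asIdeal.comap R.subtype := by
      intro hmem
      have : t * s ∈ x.1.asIdeal := hmem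
      rcases x.1.2.mem_or_mem this with h | h
      · exact htQ (x.2 h)
      · exact hs1 h
    refine lt_of_le_of_ne hle (fun heq => hnot ?_)
    have heq' : x.1.asIdeal.comap R.subtype = y.1.asIdeal.comap R.subtype :=
      congrArg PrimeSpectrum.asIdeal heq
    rw [heq']
    exact hts

lemma isIntegral_of_quotient (J : Ideal S) (A : Subring (S ⧸ J))
    (hint : Algebra.IsIntegral A (S ⧸ J)) (R : Subring S)
    (hR : R = A.comap (Ideal.Quotient.mk J)) :
    Algebra.IsIntegral R S := by
  subst hR
  set R := A.comap (Ideal.Quotient.mk J) with hRdef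
  have hJR : ∀ x ∈ J, x ∈ R := by
    intro x hx
    show Ideal.Quotient.mk J x ∈ A
    rw [Ideal.Quotient.eq_zero_iff_mem.mpr hx]
    exact A.zero_mem
  constructor
  intro s
  by_cases hone : (1 : S) ∈ J
  · have hs : s ∈ R := by
      show Ideal.Quotient.mk J s ∈ A
      have : Ideal.Quotient.mk J s = 0 := by
        rw [Ideal.Quotient.eq_zero_iff_mem]
        simpa using J.mul_mem_right s hone
      rw [this]; exact A.zero_mem
    exact ⟨Polynomial.X - Polynomial.C ⟨s, hs⟩, Polynomial.monic_X_sub_C _, by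
      rw [Polynomial.eval₂_sub, Polynomial.eval₂_X, Polynomial.eval₂_C, sub_eq_zero]; rfl⟩
  · set ρ : R →+* A := RingHom.codRestrict ((Ideal.Quotient.mk J).comp R.subtype) A.toSubsemiring
      (fun r => r.2) with hρ
    have hρsurj : Function.Surjective ρ := by
      intro a
      obtain ⟨x, hx⟩ := Ideal.Quotient.mk_surjective (I := J) (a : S ⧸ J)
      have hxR : x ∈ R := by show Ideal.Quotient.mk J x ∈ A; rw [hx]; exact a.2
      exact ⟨⟨x, hxR⟩, Subtype.ext hx⟩
    haveI : Nontrivial (S ⧸ J) :=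
      Ideal.Quotient.nontrivial_iff.mpr (fun h => hone (h ▸ Submodule.mem_top))
    haveI : Nontrivial A :=
      ⟨⟨0, 1, fun h => zero_ne_one (congrArg Subtype.val h : ((0 : S ⧸ J)) = 1)⟩⟩
    obtain ⟨f, hf_monic, hf⟩ := hint.isIntegral (Ideal.Quotient.mk J s)
    have hlift : f ∈ Polynomial.lifts (ρ : R →+* A) := by
      rw [Polynomial.lifts_iff_coeff_lifts]
      exact fun n => hρsurj (f.coeff n)
    obtain ⟨g, hg_map, _, hg_monic⟩ :=
      Polynomial.lifts_and_degree_eq_and_monic hlift hf_monic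
    have hcomp : (A.subtype.comp ρ) = (Ideal.Quotient.mk J).comp R.subtype := rfl
    have heval : Ideal.Quotient.mk J (Polynomial.eval₂ R.subtype s g) = 0 := by
      have h1 : Polynomial.eval₂ A.subtype (Ideal.Quotient.mk J s) f = 0 := hf
      rw [← hg_map, Polynomial.eval₂_map, hcomp] at h1
      rw [← h1]
      exact Polynomial.hom_eval₂ g R.subtype (Ideal.Quotient.mk J) s
    have hj : Polynomial.eval₂ R.subtype s g ∈ J := Ideal.Quotient.eq_zero_iff_mem.mp heval
    set j : R := ⟨_, hJR _ hj⟩ with hjdef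
    have hdeg : 0 < g.natDegree := by
      rcases Nat.eq_zero_or_pos g.natDegree with h0 | h
      · exfalso
        have : g = 1 := hg_monic.natDegree_eq_zero.mp h0
        rw [this] at hj
        simp at hj
        exact hone hj
      · exact h
    refine ⟨g + Polynomial.C (-j), ?_, ?_⟩
    · refine hg_monic.add_of_left ?_
      calc (Polynomial.C (-j)).degree ≤ 0 := Polynomial.degree_C_le
        _ < g.degree := by
            exact_mod_cast Polynomial.natDegree_pos_iff_degree_pos.mp hdeg
    · show Polynomial.eval₂ (algebraMap (↥R) S) s (g + Polynomial.C (-j)) = 0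
      have hmap : algebraMap (↥R) S = R.subtype := rfl
      rw [hmap, Polynomial.eval₂_add, Polynomial.eval₂_C]
      have h2 : R.subtype (-j) = -(Polynomial.eval₂ R.subtype s g) := by
        simp [hjdef]
      rw [h2]
      ring

lemma locBij (J : Ideal S) (hJR : ∀ x ∈ J, x ∈ R) {t : S} (htJ : t ∈ J)
    (Q : Ideal S) (hQ : Q.IsPrime) (htQ : t ∉ Q) (P : Ideal R) (hP : P.IsPrime)
    (hPQ : P = Q.comap R.subtype) :
    Function.Bijective (Localization.localRingHom P Q R.subtype hPQ) := by
  constructor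
  · rw [injective_iff_map_eq_zero]
    intro x hx
    obtain ⟨⟨r, w⟩, rfl⟩ := IsLocalization.mk'_surjective P.primeCompl x
    rw [Localization.localRingHom_mk'] at hx
    rw [IsLocalization.mk'_eq_zero_iff] at hx
    obtain ⟨m, hm⟩ := hx
    have htm : t * (m : S) ∈ J := J.mul_mem_right _ htJ
    have htmQ : t * (m : S) ∉ Q := fun h => (hQ.mem_or_mem h).elim htQ m.2
    have hmem : (⟨t * m, hJR _ htm⟩ : R) ∈ P.primeCompl := by
      intro h
      exact htmQ (by rw [hPQ] at h; exact h)
    rw [IsLocalization.mk'_eq_zero_iff]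
    refine ⟨⟨⟨t * m, hJR _ htm⟩, hmem⟩, ?_⟩
    apply Subtype.ext
    push_cast
    have hm' : (m : S) * (r : S) = 0 := hm
    calc t * (m : S) * (r : S) = t * ((m : S) * (r : S)) := by ring
      _ = 0 := by rw [hm', mul_zero]
  · intro y
    obtain ⟨⟨s, u⟩, rfl⟩ := IsLocalization.mk'_surjective Q.primeCompl y
    have hts : t * s ∈ J := J.mul_mem_right s htJ
    have htu : t * (u : S) ∈ J := J.mul_mem_right _ htJ
    have htuQ : t * (u : S) ∉ Q := fun h => (hQ.mem_or_mem h).elim htQ u.2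
    have hmem : (⟨t * u, hJR _ htu⟩ : R) ∈ P.primeCompl := by
      intro h
      exact htuQ (by rw [hPQ] at h; exact h)
    refine ⟨IsLocalization.mk' _ (⟨t * s, hJR _ hts⟩ : R) (⟨⟨t * u, hJR _ htu⟩, hmem⟩ :
      P.primeCompl), ?_⟩
    rw [Localization.localRingHom_mk']
    apply IsLocalization.mk'_eq_of_eq'
    show s * (t * (u : S)) = (t * s) * (u : S)
    ring

lemma not_J_le_of_height_one (J : Ideal S)
    (hht : ∀ q, ∀ hq : q ∈ J.minimalPrimes,
      2 ≤ Order.height (⟨q, hq.1.1⟩ : PrimeSpectrum S))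
    (hint : Algebra.IsIntegral R S)
    (P : Ideal R) (hP : P.IsPrime)
    (h1 : Order.height (⟨P, hP⟩ : PrimeSpectrum R) = 1) :
    ¬ (J.comap R.subtype ≤ P) := by
  intro hle
  have halg : algebraMap (↥R) S = R.subtype := rfl
  obtain ⟨Q, hJQ, hQprime, hQP⟩ := Ideal.exists_ideal_comap_le_prime (f := algebraMap (↥R) S) P J (by rw [halg]; exact hle)
  obtain ⟨q, hqmin, hqQ⟩ := Ideal.exists_minimalPrimes_le hJQ
  have h2 : 2 ≤ Order.height (⟨q, hqmin.1.1⟩ : PrimeSpectrum S) := hht q hqmin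
  obtain ⟨c, hclast, hclen⟩ := Order.exists_series_of_le_height _ (n := 2) h2
  let c' : LTSeries (PrimeSpectrum ↥R) :=
    ⟨c.length, fun i => ⟨(c i).asIdeal.comap R.subtype, (c i).2.comap _⟩, by
      intro i
      obtain ⟨x, hx2, hx1⟩ := SetLike.exists_of_lt (show (c i.castSucc).asIdeal < (c i.succ).asIdeal from c.step i)
      haveI := (c i.castSucc).2
      have := Ideal.comap_lt_comap_of_integral_mem_sdiff (R := ↥R)
        (I := (c i.castSucc).asIdeal) (J := (c i.succ).asIdeal)
        (show (c i.castSucc).asIdeal < (c i.succ).asIdeal from c.step i).le ⟨hx2, hx1⟩ (Algebra.IsIntegral.isIntegral x)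
      rw [halg] at this
      exact this⟩
  have hlast_le : c'.last ≤ (⟨P, hP⟩ : PrimeSpectrum ↥R) := by
    show (c (Fin.last _)).asIdeal.comap R.subtype ≤ P
    have : (c (Fin.last _)).asIdeal = q := congrArg PrimeSpectrum.asIdeal hclast
    rw [this]
    refine le_trans (Ideal.comap_mono hqQ) ?_
    rw [← halg]; exact hQP
  have hfin := Order.length_le_height hlast_le
  rw [h1] at hfin
  have hlen : c'.length = 2 := hclen
  rw [hlen] at hfin
  exact (by norm_num : ¬ ((2 : ℕ) : ℕ∞) ≤ 1) hfin

end PullbackAux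

/-- Let `S` be a generalized Krull domain and `J` an ideal with finitely
many minimal primes, all of height at least two.  Let `A` be a subring of `S/J` over which
`S/J` is integral, and `R` the pullback of `A → S/J ← S`.  Then contraction induces a
bijection between the height-one primes of `S` and those of `R`, under which the corresponding
localizations coincide (the canonical map `R_P → S_Q` is an isomorphism); in particular
`R_P` is a valuation ring for every height-one prime `P` of `R`. -/
theorem heightOne_bijection_of_pullback {S : Type*} [CommRing S] [IsDomain S]
    (hS : IsGenKrull S) (J : Ideal S) (hfin : J.minimalPrimes.Finite)
    (hht : ∀ q, ∀ hq : q ∈ J.minimalPrimes,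
      2 ≤ Order.height (⟨q, hq.1.1⟩ : PrimeSpectrum S))
    (A : Subring (S ⧸ J)) (hint : Algebra.IsIntegral A (S ⧸ J))
    (R : Subring S) (hR : R = A.comap (Ideal.Quotient.mk J)) :
    (∀ Q : Ideal S, HeightOne Q → HeightOne (Q.comap R.subtype)) ∧
    (∀ Q₁ Q₂ : Ideal S, HeightOne Q₁ → HeightOne Q₂ →
      Q₁.comap R.subtype = Q₂.comap R.subtype → Q₁ = Q₂) ∧
    (∀ P : Ideal R, HeightOne P →
      ∃ Q : Ideal S, HeightOne Q ∧ Q.comap R.subtype = P) ∧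
    (∀ (Q : Ideal S) (hQ : Q.IsPrime),
      Order.height (⟨Q, hQ⟩ : PrimeSpectrum S) = 1 →
      haveI := hQ
      Function.Bijective (Localization.localRingHom (Q.comap R.subtype) Q R.subtype rfl)) ∧
    (∀ (P : Ideal R) (hP : P.IsPrime),
      Order.height (⟨P, hP⟩ : PrimeSpectrum R) = 1 →
      haveI := hP
      ValuationRing (Localization.AtPrime P)) := by
  have hJR : ∀ x ∈ J, x ∈ R := by
    intro x hx
    rw [hR]
    show Ideal.Quotient.mk J x ∈ A
    rw [Ideal.Quotient.eq_zero_iff_mem.mpr hx]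
    exact A.zero_mem
  have existsT : ∀ Q : Ideal S, ∀ hQ : Q.IsPrime,
      Order.height (⟨Q, hQ⟩ : PrimeSpectrum S) = 1 → ∃ t ∈ J, t ∉ Q := by
    intro Q hQ h1
    by_contra hcon
    push_neg at hcon
    obtain ⟨q, hqmin, hqQ⟩ := Ideal.exists_minimalPrimes_le (fun x hx => hcon x hx : J ≤ Q)
    have h2 := hht q hqmin
    have h3 : Order.height (⟨q, hqmin.1.1⟩ : PrimeSpectrum S) ≤
        Order.height (⟨Q, hQ⟩ : PrimeSpectrum S) := Order.height_mono hqQ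
    rw [h1] at h3
    exact (by norm_num : ¬ ((2 : ℕ∞) ≤ 1)) (le_trans h2 h3)
  have hint' : Algebra.IsIntegral R S := isIntegral_of_quotient J A hint R hR
  have existsT' : ∀ P : Ideal ↥R, ∀ hP : P.IsPrime,
      Order.height (⟨P, hP⟩ : PrimeSpectrum ↥R) = 1 →
      ∃ t : S, ∃ htJ : t ∈ J, (⟨t, hJR t htJ⟩ : ↥R) ∉ P := by
    intro P hP h1
    have hnle := not_J_le_of_height_one J hht hint' P hP h1
    rw [SetLike.not_le_iff_exists] at hnle
    obtain ⟨x, hxJ, hxP⟩ := hnle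
    refine ⟨(x : S), hxJ, ?_⟩
    have : (⟨(x : S), hJR _ hxJ⟩ : ↥R) = x := Subtype.ext rfl
    rw [this]
    exact hxP
  refine ⟨?_, ?_, ?_, ?_, ?_⟩
  · rintro Q ⟨hQ, h1⟩
    obtain ⟨t, htJ, htQ⟩ := existsT Q hQ h1
    refine ⟨hQ.comap R.subtype, ?_⟩
    rw [height_comap_eq (J := J) (hJR := hJR) (htJ := htJ) Q hQ htQ]
    exact h1
  · rintro Q₁ Q₂ ⟨hQ₁, h1⟩ ⟨hQ₂, h2⟩ hcomap
    obtain ⟨t₁, ht₁J, ht₁⟩ := existsT Q₁ hQ₁ h1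
    obtain ⟨t₂, ht₂J, ht₂⟩ := existsT Q₂ hQ₂ h2
    apply le_antisymm
    · intro s hs
      have hmem : (⟨t₂ * s, hJR _ (J.mul_mem_right s ht₂J)⟩ : ↥R) ∈ Q₁.comap R.subtype :=
        Q₁.mul_mem_left t₂ hs
      rw [hcomap] at hmem
      have h3 : t₂ * s ∈ Q₂ := hmem
      exact (hQ₂.mem_or_mem h3).resolve_left ht₂
    · intro s hs
      have hmem : (⟨t₁ * s, hJR _ (J.mul_mem_right s ht₁J)⟩ : ↥R) ∈ Q₂.comap R.subtype :=
        Q₂.mul_mem_left t₁ hs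
      rw [← hcomap] at hmem
      have h3 : t₁ * s ∈ Q₁ := hmem
      exact (hQ₁.mem_or_mem h3).resolve_left ht₁
  · rintro P ⟨hP, h1⟩
    obtain ⟨t, htJ, htP⟩ := existsT' P hP h1
    have hQ : (extId J hJR htJ hP htP P).IsPrime := extId_isPrime hP le_rfl
    have hcomap : (extId J hJR htJ hP htP P).comap R.subtype = P :=
      comap_extId (htP := htP) hP le_rfl
    have htQ : t ∉ extId J hJR htJ hP htP P := by
      intro h
      apply htP
      have hmem : (⟨t, hJR t htJ⟩ : ↥R) ∈ (extId J hJR htJ hP htP P).comap R.subtype := h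
      rwa [hcomap] at hmem
    refine ⟨extId J hJR htJ hP htP P, ⟨hQ, ?_⟩, hcomap⟩
    have he := height_comap_eq (J := J) (hJR := hJR) (htJ := htJ) _ hQ htQ
    have heq : (⟨(extId J hJR htJ hP htP P).comap R.subtype, hQ.comap R.subtype⟩ :
        PrimeSpectrum ↥R) = ⟨P, hP⟩ := PrimeSpectrum.ext hcomap
    rw [heq, h1] at he
    exact he.symm
  · intro Q hQ h1
    obtain ⟨t, htJ, htQ⟩ := existsT Q hQ h1
    exact locBij J hJR htJ Q hQ htQ _ (hQ.comap R.subtype) rfl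
  · intro P hP h1
    haveI := hP
    obtain ⟨t, htJ, htP⟩ := existsT' P hP h1
    have hQ : (extId J hJR htJ hP htP P).IsPrime := extId_isPrime hP le_rfl
    haveI := hQ
    have hcomap : (extId J hJR htJ hP htP P).comap R.subtype = P :=
      comap_extId (htP := htP) hP le_rfl
    have htQ : t ∉ extId J hJR htJ hP htP P := by
      intro h
      apply htP
      have hmem : (⟨t, hJR t htJ⟩ : ↥R) ∈ (extId J hJR htJ hP htP P).comap R.subtype := h
      rwa [hcomap] at hmem
    have hhQ : Order.height (⟨extId J hJR htJ hP htP P, hQ⟩ : PrimeSpectrum S) = 1 := by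
      have he := height_comap_eq (J := J) (hJR := hJR) (htJ := htJ) _ hQ htQ
      have heq : (⟨(extId J hJR htJ hP htP P).comap R.subtype, hQ.comap R.subtype⟩ :
          PrimeSpectrum ↥R) = ⟨P, hP⟩ := PrimeSpectrum.ext hcomap
      rw [heq, h1] at he
      exact he.symm
    haveI hval : ValuationRing (Localization.AtPrime (extId J hJR htJ hP htP P)) :=
      hS.2.2 _ hQ hhQ
    have hbij := locBij J hJR htJ (extId J hJR htJ hP htP P) hQ htQ P hP hcomap.symm
    let e : Localization.AtPrime P ≃+* Localization.AtPrime (extId J hJR htJ hP htP P) :=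
      RingEquiv.ofBijective _ hbij
    refine { cond' := fun a b => ?_ }
    obtain ⟨c, hc⟩ := ValuationRing.cond (e a) (e b)
    refine ⟨e.symm c, ?_⟩
    rcases hc with hc | hc
    · left
      apply e.injective
      rw [map_mul, RingEquiv.apply_symm_apply, hc]
    · right
      apply e.injective
      rw [map_mul, RingEquiv.apply_symm_apply, hc]
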